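/- The function P_i(r/(1−t))·(1−t)^i is a polynomial in the variables r and t of total degree i, for every natural number i. -/

import Mathlib

open Polynomial

/-- The Jacobi polynomial `P_n^{(a,b)}` with natural-number parameters, via the explicit
formula `P_n^{(a,b)}(x) = ∑ s, C(n+a, n−s) C(n+b, s) ((x−1)/2)^s ((x+1)/2)^{n−s}`;
`jacobiPoly 0 0 n` is the Legendre polynomial `P_n`. -/
noncomputable def jacobiPoly (a b n : ℕ) : Polynomial ℝ :=
  ∑ s ∈ Finset.range (n + 1),
    C ((n + a).choose (n - s) : ℝ) * C ((n + b).choose s : ℝ) *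
      (C (1 / 2) * (X - 1)) ^ s * (C (1 / 2) * (X + 1)) ^ (n - s)

noncomputable def homogP (i : ℕ) : MvPolynomial (Fin 2) ℝ :=
  ∑ s ∈ Finset.range (i + 1),
    MvPolynomial.C (i.choose (i - s) : ℝ) * MvPolynomial.C (i.choose s : ℝ) *
      (MvPolynomial.C (1 / 2) * (MvPolynomial.X 0 - (1 - MvPolynomial.X 1))) ^ s *
      (MvPolynomial.C (1 / 2) * (MvPolynomial.X 0 + (1 - MvPolynomial.X 1))) ^ (i - s)

lemma natDegree_aeval_le (p : MvPolynomial (Fin 2) ℝ) (f : Fin 2 → Polynomial ℝ)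
    (hf : ∀ j, (f j).natDegree ≤ 1) :
    (MvPolynomial.aeval f p).natDegree ≤ p.totalDegree := by
  rw [MvPolynomial.aeval_def, MvPolynomial.eval₂_eq]
  apply Polynomial.natDegree_sum_le_of_forall_le
  intro d hd
  calc (algebraMap ℝ (Polynomial ℝ) (p.coeff d) * ∏ j ∈ d.support, f j ^ d j).natDegree
      ≤ (algebraMap ℝ (Polynomial ℝ) (p.coeff d)).natDegree + (∏ j ∈ d.support, f j ^ d j).natDegree :=
        Polynomial.natDegree_mul_le
    _ ≤ 0 + ∑ j ∈ d.support, (f j ^ d j).natDegree := by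
        gcongr
        · exact le_of_eq (Polynomial.natDegree_C _)
        · exact Polynomial.natDegree_prod_le _ _
    _ ≤ ∑ j ∈ d.support, d j * 1 := by
        rw [zero_add]
        gcongr with j
        exact (Polynomial.natDegree_pow_le).trans (by gcongr; exact hf j)
    _ ≤ p.totalDegree := by
        simp only [mul_one]
        simpa [Finsupp.sum] using MvPolynomial.le_totalDegree hd


lemma homogP_totalDegree_le (i : ℕ) : (homogP i).totalDegree ≤ i := by
  unfold homogP
  set A : MvPolynomial (Fin 2) ℝ :=
    MvPolynomial.C (1/2) * (MvPolynomial.X 0 - (1 - MvPolynomial.X 1)) with hAdef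
  set B : MvPolynomial (Fin 2) ℝ :=
    MvPolynomial.C (1/2) * (MvPolynomial.X 0 + (1 - MvPolynomial.X 1)) with hBdef
  have h1 : A.totalDegree ≤ 1 := by
    rw [hAdef]
    refine (MvPolynomial.totalDegree_mul _ _).trans ?_
    rw [MvPolynomial.totalDegree_C, zero_add, sub_eq_add_neg, neg_sub]
    refine (MvPolynomial.totalDegree_add _ _).trans ?_
    simp only [max_le_iff, MvPolynomial.totalDegree_X, le_refl, true_and]
    rw [sub_eq_add_neg]
    refine (MvPolynomial.totalDegree_add _ _).trans ?_
    simp [MvPolynomial.totalDegree_X, MvPolynomial.totalDegree_neg, MvPolynomial.totalDegree_one]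
  have h2 : B.totalDegree ≤ 1 := by
    rw [hBdef]
    refine (MvPolynomial.totalDegree_mul _ _).trans ?_
    rw [MvPolynomial.totalDegree_C, zero_add]
    refine (MvPolynomial.totalDegree_add _ _).trans ?_
    simp only [max_le_iff, MvPolynomial.totalDegree_X, le_refl, true_and]
    rw [sub_eq_add_neg]
    refine (MvPolynomial.totalDegree_add _ _).trans ?_
    simp [MvPolynomial.totalDegree_X, MvPolynomial.totalDegree_neg, MvPolynomial.totalDegree_one]
  refine (MvPolynomial.totalDegree_finset_sum _ _).trans (Finset.sup_le fun s hs => ?_)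
  have hsi : s ≤ i := Nat.lt_succ_iff.mp (Finset.mem_range.mp hs)
  refine le_trans (MvPolynomial.totalDegree_mul _ _) ?_
  refine le_trans (add_le_add (MvPolynomial.totalDegree_mul _ _)
    (MvPolynomial.totalDegree_pow _ _)) ?_
  refine le_trans (add_le_add (add_le_add (MvPolynomial.totalDegree_mul _ _)
    (MvPolynomial.totalDegree_pow _ _)) le_rfl) ?_
  rw [MvPolynomial.totalDegree_C, MvPolynomial.totalDegree_C]
  have b1 : s * A.totalDegree ≤ s := by
    calc s * A.totalDegree ≤ s * 1 := Nat.mul_le_mul_left _ h1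
      _ = s := mul_one s
  have b2 : (i - s) * B.totalDegree ≤ i - s := by
    calc (i - s) * B.totalDegree ≤ (i - s) * 1 := Nat.mul_le_mul_left _ h2
      _ = i - s := mul_one _
  omega

lemma homogP_aeval (i : ℕ) :
    MvPolynomial.aeval ![Polynomial.X, 1] (homogP i) =
      Polynomial.C ((∑ s ∈ Finset.range (i + 1),
        (i.choose (i - s) : ℝ) * (i.choose s : ℝ)) * (1/2) ^ i) * Polynomial.X ^ i := by
  rw [homogP, map_sum, Finset.sum_mul, map_sum, Finset.sum_mul]
  refine Finset.sum_congr rfl fun s hs => ?_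
  have hsi : s ≤ i := Nat.lt_succ_iff.mp (Finset.mem_range.mp hs)
  simp only [map_mul, map_pow, map_sub, map_add, map_one, MvPolynomial.aeval_C,
    MvPolynomial.aeval_X, Matrix.cons_val_zero, Matrix.cons_val_one, Matrix.head_cons,
    sub_self, sub_zero, add_zero]
  have : (algebraMap ℝ (Polynomial ℝ) (1/2) * Polynomial.X) ^ s *
      (algebraMap ℝ (Polynomial ℝ) (1/2) * Polynomial.X) ^ (i - s) =
      (algebraMap ℝ (Polynomial ℝ) (1/2) * Polynomial.X) ^ i := by
    rw [← pow_add, Nat.add_sub_cancel' hsi]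
  rw [mul_assoc, this]
  simp only [Polynomial.algebraMap_eq, mul_pow, ← Polynomial.C_pow, ← Polynomial.C_mul]
  rw [← mul_assoc, ← Polynomial.C_mul]

lemma homogP_totalDegree (i : ℕ) : (homogP i).totalDegree = i := by
  refine le_antisymm (homogP_totalDegree_le i) ?_
  have hc : (∑ s ∈ Finset.range (i + 1),
      (i.choose (i - s) : ℝ) * (i.choose s : ℝ)) * (1/2 : ℝ) ^ i ≠ 0 := by
    have hpos : (0:ℝ) < ∑ s ∈ Finset.range (i + 1),
        (i.choose (i - s) : ℝ) * (i.choose s : ℝ) := by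
      refine Finset.sum_pos' (fun s _ => by positivity)
        ⟨0, Finset.mem_range.mpr (Nat.succ_pos i), ?_⟩
      simp
    positivity
  have h := natDegree_aeval_le (homogP i) ![Polynomial.X, 1] (by
    intro j
    fin_cases j <;> simp)
  rw [homogP_aeval i] at h
  rwa [Polynomial.natDegree_C_mul hc, Polynomial.natDegree_X_pow] at h

/-- The function `(r,t) ↦ P_i(r/(1−t))·(1−t)^i`, with `P_i` the Legendre polynomial, is a
polynomial in `r` and `t` of total degree `i`. -/
theorem legendre_homogenization (i : ℕ) :
    ∃ p : MvPolynomial (Fin 2) ℝ, p.totalDegree = i ∧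
      ∀ r t : ℝ, t ≠ 1 →
        MvPolynomial.eval ![r, t] p = (jacobiPoly 0 0 i).eval (r / (1 - t)) * (1 - t) ^ i := by
  refine ⟨homogP i, homogP_totalDegree i, fun r t ht => ?_⟩
  have h1t : (1 : ℝ) - t ≠ 0 := sub_ne_zero.mpr (Ne.symm ht)
  rw [homogP, jacobiPoly, map_sum, Polynomial.eval_finset_sum, Finset.sum_mul]
  refine Finset.sum_congr rfl fun s hs => ?_
  have hsi : s ≤ i := Nat.lt_succ_iff.mp (Finset.mem_range.mp hs)
  simp only [map_mul, map_pow, map_sub, map_add, map_one, MvPolynomial.eval_C,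
    MvPolynomial.eval_X, Matrix.cons_val_zero, Matrix.cons_val_one, Matrix.head_cons,
    Polynomial.eval_mul, Polynomial.eval_pow, Polynomial.eval_sub, Polynomial.eval_add,
    Polynomial.eval_one, Polynomial.eval_C, Polynomial.eval_X, Nat.add_zero]
  have hpowi : (1 - t) ^ i = (1 - t) ^ s * (1 - t) ^ (i - s) := by
    rw [← pow_add, Nat.add_sub_cancel' hsi]
  have e1 : ((1:ℝ)/2 * (r - (1 - t))) ^ s = (1/2 * (r / (1 - t) - 1)) ^ s * (1 - t) ^ s := by
    rw [← mul_pow]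
    congr 1
    field_simp
  have e2 : ((1:ℝ)/2 * (r + (1 - t))) ^ (i - s) =
      (1/2 * (r / (1 - t) + 1)) ^ (i - s) * (1 - t) ^ (i - s) := by
    rw [← mul_pow]
    congr 1
    field_simp
  rw [hpowi, e1, e2]
  ring
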